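/- Let H be two families of parallel lines on T² forming a simple arrangement dual to the two facet vectors (k,1) and (−k,1) of a lattice polygon, giving a lozenge tiling of T². Then a third line L on T² with primitive rational direction intersects at most ⌈(k+1)/2⌉ of the k parallel line segments into which the tiling divides each of the two 'tiers' of one of the lines, when L has direction vector (−1,−1); and a line with direction (1,0) intersects exactly one of the 2k segments. -/

import Mathlib

open Real

/-- The real two-torus, with angular coordinates modulo `2π`. -/
abbrev Torus : Type := AddCircle (2 * Real.pi) × AddCircle (2 * Real.pi)

/-- Translation of a point of the torus by a real vector. -/
noncomputable def tshift (p : Torus) (w : ℝ × ℝ) : Torus :=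
  (p.1 + (w.1 : AddCircle (2 * Real.pi)), p.2 + (w.2 : AddCircle (2 * Real.pi)))

/-- An oriented closed geodesic (line) on the torus, with primitive integer tangent
direction and offset. -/
structure OLine where
  dir : ℤ × ℤ
  primitive : IsCoprime dir.1 dir.2
  c : AddCircle (2 * Real.pi)

namespace OLine

/-- The underlying set of the oriented line: the level set of the conormal form. -/
def carrier (L : OLine) : Set Torus :=
  {θ : Torus | L.dir.2 • θ.1 - L.dir.1 • θ.2 = L.c}

/-- The real tangent vector of the line. -/
def tangent (L : OLine) : ℝ × ℝ := ((L.dir.1 : ℝ), (L.dir.2 : ℝ))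

/-- The right normal `ν = (γ₂, -γ₁)` of the oriented line with tangent `γ`:
crossing the line in the direction `ν` increases the index by one. -/
def rnormal (L : OLine) : ℝ × ℝ := ((L.dir.2 : ℝ), (-L.dir.1 : ℝ))

/-- The left normal `-ν = (-γ₂, γ₁)`. -/
def lnormal (L : OLine) : ℝ × ℝ := ((-L.dir.2 : ℝ), (L.dir.1 : ℝ))

end OLine

/-- A finite oriented line arrangement on the torus. -/
structure Arrangement where
  lines : Finset OLine
  nonempty : lines.Nonempty

namespace Arrangement

/-- The union of the lines of the arrangement, as a subset of the torus. -/
def carrier (A : Arrangement) : Set Torus :=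
  ⋃ L ∈ (A.lines : Set OLine), OLine.carrier L

/-- The point `q` lies on the line `L` of the arrangement and on no other line:
`q` is an interior point of an edge of the arrangement. -/
def OnExactlyOne (A : Arrangement) (q : Torus) (L : OLine) : Prop :=
  L ∈ A.lines ∧ q ∈ L.carrier ∧
    ∀ L' ∈ A.lines, q ∈ OLine.carrier L' → L' = L

/-- The point `q` is a generic (transversal) intersection point of exactly the two
lines `L₁ ≠ L₂` of the arrangement. -/
def OnExactlyTwo (A : Arrangement) (q : Torus) (L₁ L₂ : OLine) : Prop :=
  L₁ ∈ A.lines ∧ L₂ ∈ A.lines ∧ L₁ ≠ L₂ ∧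
    q ∈ L₁.carrier ∧ q ∈ L₂.carrier ∧
    ∀ L' ∈ A.lines, q ∈ OLine.carrier L' → L' = L₁ ∨ L' = L₂

/-- The arrangement is simple: no three distinct lines have a common point. -/
def Simple (A : Arrangement) : Prop :=
  ∀ q : Torus, ∀ L₁ ∈ A.lines, ∀ L₂ ∈ A.lines, ∀ L₃ ∈ A.lines,
    q ∈ OLine.carrier L₁ → q ∈ OLine.carrier L₂ → q ∈ OLine.carrier L₃ →
      L₁ = L₂ ∨ L₁ = L₃ ∨ L₂ = L₃

/-- The vertices of the arrangement: points lying on two distinct lines. -/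
def vertices (A : Arrangement) : Set Torus :=
  {q : Torus | ∃ L₁ ∈ A.lines, ∃ L₂ ∈ A.lines,
    L₁ ≠ L₂ ∧ q ∈ OLine.carrier L₁ ∧ q ∈ OLine.carrier L₂}

end Arrangement

/-- `ι` is constant on the connected components of the complement of the
arrangement. -/
def IndexConst (A : Arrangement) (ι : Torus → ℤ) : Prop :=
  ∀ p q : Torus, q ∈ connectedComponentIn A.carrierᶜ p → ι q = ι p

/-- The crossing rule for Johansson's index map: crossing a line of the arrangement
(tangent `γ`) along the right normal `ν = (γ₂,-γ₁)` increases the index by one. -/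
def CrossingRule (A : Arrangement) (ι : Torus → ℤ) : Prop :=
  ∀ q L, A.OnExactlyOne q L →
    ∃ ε₀ > (0:ℝ), ∀ ε : ℝ, 0 < ε → ε < ε₀ →
      tshift q (ε • L.rnormal) ∉ A.carrier ∧
      tshift q (ε • L.lnormal) ∉ A.carrier ∧
      ι (tshift q (ε • L.rnormal)) = ι (tshift q (ε • L.lnormal)) + 1

/-- A cell of the complement is oriented if along every edge of the arrangement in
its boundary the cell lies on the left of the oriented line through the edge. -/
def IsOrientedCell (A : Arrangement) (P : Set Torus) : Prop :=
  ∀ q L, A.OnExactlyOne q L → q ∈ closure P →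
    ∃ ε₀ > (0:ℝ), ∀ ε : ℝ, 0 < ε → ε < ε₀ → tshift q (ε • L.lnormal) ∈ P

/-- The arrangement is admissible: every edge bounds an oriented region. -/
def Admissible (A : Arrangement) : Prop :=
  ∀ q L, A.OnExactlyOne q L →
    ∃ p : Torus, p ∉ A.carrier ∧
      q ∈ closure (connectedComponentIn A.carrierᶜ p) ∧
      IsOrientedCell A (connectedComponentIn A.carrierᶜ p)

open Real

lemma coe_eq_iff (x y : ℝ) : ((x : ℝ) : AddCircle (2*Real.pi)) = (y : ℝ) ↔ ∃ n : ℤ, x = y + 2*Real.pi*n := by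
  rw [show ((x : ℝ) : AddCircle (2*Real.pi)) = (y:ℝ) ↔ _ from QuotientAddGroup.eq_iff_sub_mem,
    AddSubgroup.mem_zmultiples_iff]
  constructor
  · rintro ⟨n, hn⟩; rw [zsmul_eq_mul] at hn; exact ⟨n, by linarith⟩
  · rintro ⟨n, hn⟩; exact ⟨n, by rw [zsmul_eq_mul]; linarith⟩

lemma count_aux (k : ℕ) (hk : 1 ≤ k) (D : ℝ) (ε : ℕ) :
    (({j : ℕ | j < 2*k ∧ j % 2 = ε ∧ ∃ n : ℤ,
        D + j*((k:ℝ)+1) < 2*(k:ℝ)*n ∧ 2*(k:ℝ)*n < D + j*((k:ℝ)+1) + ((k:ℝ)+1)}.ncard : ℤ))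
      ≤ ⌈((k:ℚ)+1)/2⌉ := by
  classical
  set E : ℝ := D + ε*((k:ℝ)+1) with hE
  set T : Set ℤ := {N : ℤ | E < 2*(N:ℝ) ∧ 2*(N:ℝ) < E + ((k:ℝ)+1)} with hT
  have hTsub : T ⊆ ↑(Finset.Icc (⌊E/2⌋+1) (⌈(E+((k:ℝ)+1))/2⌉ - 1)) := by
    intro N hN
    obtain ⟨h1, h2⟩ := hN
    simp only [Finset.coe_Icc, Set.mem_Icc]
    constructor
    · have : ⌊E/2⌋ < N := Int.floor_lt.mpr (by push_cast; linarith)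
      omega
    · have : N < ⌈(E+((k:ℝ)+1))/2⌉ := Int.lt_ceil.mpr (by push_cast; linarith)
      omega
  have hTfin : T.Finite := Set.Finite.subset (Finset.Icc _ _).finite_toSet hTsub
  have hTcard : (T.ncard : ℤ) ≤ ⌈((k:ℚ)+1)/2⌉ := by
    have h1 : T.ncard ≤ (Finset.Icc (⌊E/2⌋+1) (⌈(E+((k:ℝ)+1))/2⌉ - 1)).card := by
      rw [← Set.ncard_coe_finset]
      exact Set.ncard_le_ncard hTsub (Finset.finite_toSet _)
    have h2 := Int.card_Icc (⌊E/2⌋+1) (⌈(E+((k:ℝ)+1))/2⌉ - 1)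
    have h3 : ⌈(E+((k:ℝ)+1))/2⌉ ≤ ⌊E/2⌋ + 1 + ⌈(((k:ℝ))+1)/2⌉ := by
      have ha := Int.ceil_add_le (E/2) (((k:ℝ)+1)/2)
      have hb := Int.ceil_le_floor_add_one (E/2)
      rw [show (E+((k:ℝ)+1))/2 = E/2 + ((k:ℝ)+1)/2 by ring]
      omega
    have h4 : ⌈(((k:ℝ))+1)/2⌉ = ⌈((k:ℚ)+1)/2⌉ := by
      rw [show ((k:ℝ)+1)/2 = ((((k:ℚ)+1)/2 : ℚ) : ℝ) by push_cast; ring, Rat.ceil_cast]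
    have h5 : (1:ℤ) ≤ ⌈((k:ℚ)+1)/2⌉ := by
      have hq : (1:ℚ) ≤ ((k:ℚ)+1)/2 := by
        have : (1:ℚ) ≤ (k:ℚ) := by exact_mod_cast hk
        linarith
      calc (1:ℤ) = ⌈(1:ℚ)⌉ := by norm_num
        _ ≤ _ := Int.ceil_le_ceil hq
    omega
  set f : ℕ → ℤ := fun j => if h : ∃ n : ℤ,
      D + j*((k:ℝ)+1) < 2*(k:ℝ)*n ∧ 2*(k:ℝ)*n < D + j*((k:ℝ)+1) + ((k:ℝ)+1)
    then (k:ℤ) * h.choose - (j/2 : ℕ) * ((k:ℤ)+1) else 0 with hf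
  have hmaps : ∀ j ∈ {j : ℕ | j < 2*k ∧ j % 2 = ε ∧ ∃ n : ℤ,
      D + j*((k:ℝ)+1) < 2*(k:ℝ)*n ∧ 2*(k:ℝ)*n < D + j*((k:ℝ)+1) + ((k:ℝ)+1)}, f j ∈ T := by
    rintro j ⟨hj1, hj2, hj3⟩
    rw [hf]; dsimp only; rw [dif_pos hj3]
    obtain ⟨hn1, hn2⟩ := hj3.choose_spec
    set q : ℕ := j / 2 with hq
    have hjeq : (j:ℝ)*((k:ℝ)+1) = (2*(q:ℝ) + (ε:ℝ))*((k:ℝ)+1) := by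
      have hje : j = 2*q + ε := by omega
      rw [show (j:ℝ) = 2*(q:ℝ) + (ε:ℝ) by exact_mod_cast congrArg (Nat.cast : ℕ → ℝ) hje]
    constructor
    · show E < 2*((((k:ℤ) * hj3.choose - q * ((k:ℤ)+1)):ℤ):ℝ)
      push_cast
      rw [hE]
      linarith [hn1, hjeq]
    · show 2*((((k:ℤ) * hj3.choose - q * ((k:ℤ)+1)):ℤ):ℝ) < E + ((k:ℝ)+1)
      push_cast
      rw [hE]
      linarith [hn2, hjeq]
  have hinj : Set.InjOn f {j : ℕ | j < 2*k ∧ j % 2 = ε ∧ ∃ n : ℤ,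
      D + j*((k:ℝ)+1) < 2*(k:ℝ)*n ∧ 2*(k:ℝ)*n < D + j*((k:ℝ)+1) + ((k:ℝ)+1)} := by
    rintro j1 ⟨h11, h12, h13⟩ j2 ⟨h21, h22, h23⟩ hfe
    rw [hf] at hfe; dsimp only at hfe; rw [dif_pos h13, dif_pos h23] at hfe
    set q1 : ℕ := j1 / 2 with hq1
    set q2 : ℕ := j2 / 2 with hq2
    have hdvd : (k:ℤ) ∣ (q1:ℤ) - (q2:ℤ) := by
      have h : (k:ℤ) * (h13.choose - h23.choose) = ((q1:ℤ) - (q2:ℤ)) * ((k:ℤ)+1) := by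
        linear_combination hfe
      have hd1 : (k:ℤ) ∣ ((q1:ℤ) - (q2:ℤ)) * ((k:ℤ)+1) := ⟨_, h.symm⟩
      have hd2 : (k:ℤ) ∣ ((q1:ℤ) - (q2:ℤ)) * (k:ℤ) := dvd_mul_left _ _
      have := dvd_sub hd1 hd2
      rwa [show ((q1:ℤ) - (q2:ℤ)) * ((k:ℤ)+1) - ((q1:ℤ) - (q2:ℤ)) * (k:ℤ)
          = (q1:ℤ) - (q2:ℤ) by ring] at this
    obtain ⟨c, hc⟩ := hdvd
    have hb1 : q1 < k := by omega
    have hb2 : q2 < k := by omega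
    have hcu : c < 1 := by
      have h1' : (k:ℤ)*c < (k:ℤ)*1 := by rw [mul_one, ← hc]; omega
      exact lt_of_mul_lt_mul_left h1' (Int.natCast_nonneg k)
    have hcl : (-1:ℤ) < c := by
      have h1' : (k:ℤ)*(-1) < (k:ℤ)*c := by rw [← hc]; omega
      exact lt_of_mul_lt_mul_left h1' (Int.natCast_nonneg k)
    have : c = 0 := by omega
    rw [this, mul_zero] at hc
    omega
  calc ({j : ℕ | j < 2*k ∧ j % 2 = ε ∧ ∃ n : ℤ,
        D + j*((k:ℝ)+1) < 2*(k:ℝ)*n ∧ 2*(k:ℝ)*n < D + j*((k:ℝ)+1) + ((k:ℝ)+1)}.ncard : ℤ)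
      ≤ (T.ncard : ℤ) := by
        exact_mod_cast Set.ncard_le_ncard_of_injOn f hmaps hinj hTfin
    _ ≤ _ := hTcard

set_option maxHeartbeats 1600000 in
/-- The lozenge tiling of the torus cut out by the two geodesics of
directions `(1,-k)` and `(1,k)` divides the second one (here parametrized by `p5`)
into `2k` parallel segments, arranged in two tiers according to whether they meet
the horizontal line `H₂`.  A geodesic of direction `(-1,1)` (dual to the facet
`(-1,-1)`) meets at most `⌈(k+1)/2⌉` segments on each tier, and a vertical geodesic
(dual to the facet `(1,0)`) meets exactly one of the `2k` segments. -/
theorem stmt_12 (k : ℕ) (hk : 1 ≤ k) (a b c₁ c₂ c₃ : ℝ)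
    (p5 : ℝ → Torus)
    (hp5 : ∀ t : ℝ, p5 t =
      ((t : AddCircle (2 * Real.pi)),
       ((k * t + b : ℝ) : AddCircle (2 * Real.pi))))
    (t0 : ℝ) (ht0 : t0 = (a - b) / (2 * k))
    (Seg : ℕ → Set Torus)
    (hSeg : ∀ j : ℕ, Seg j =
      p5 '' Set.Ioo (t0 + Real.pi * j / k) (t0 + Real.pi * (j + 1) / k))
    (H2 L1 L3 : Set Torus)
    (hH2 : H2 = {θ : Torus | θ.2 = ((c₂ : ℝ) : AddCircle (2 * Real.pi))})
    (hL1 : L1 = {θ : Torus | θ.1 + θ.2 = ((c₁ : ℝ) : AddCircle (2 * Real.pi))})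
    (hL3 : L3 = {θ : Torus | θ.1 = ((c₃ : ℝ) : AddCircle (2 * Real.pi))})
    (hgen3 : ∀ j : ℕ, p5 (t0 + Real.pi * j / k) ∉ L3)
    (hgen2 : ∀ j : ℕ, p5 (t0 + Real.pi * j / k) ∉ H2) :
    (({j : ℕ | j < 2 * k ∧ (Seg j ∩ H2).Nonempty ∧ (Seg j ∩ L1).Nonempty}.ncard : ℤ)
        ≤ ⌈((k : ℚ) + 1) / 2⌉) ∧
    (({j : ℕ | j < 2 * k ∧ ¬ (Seg j ∩ H2).Nonempty ∧ (Seg j ∩ L1).Nonempty}.ncard : ℤ)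
        ≤ ⌈((k : ℚ) + 1) / 2⌉) ∧
    {j : ℕ | j < 2 * k ∧ (Seg j ∩ L3).Nonempty}.ncard = 1 := by
  have hπ : (0:ℝ) < π := Real.pi_pos
  have hkn : 0 < k := hk
  have hk0 : (0:ℝ) < (k:ℝ) := by exact_mod_cast hkn
  have hlt : ∀ r t : ℝ, (t0 + π*r/(k:ℝ) < t) ↔ π*r < (t - t0)*(k:ℝ) := by
    intro r t
    rw [show (t0 + π*r/(k:ℝ) < t) ↔ (π*r/(k:ℝ) < t - t0) from by constructor <;> intro h <;> linarith,
      div_lt_iff₀ hk0]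
  have htl : ∀ r t : ℝ, (t < t0 + π*r/(k:ℝ)) ↔ (t - t0)*(k:ℝ) < π*r := by
    intro r t
    rw [show (t < t0 + π*r/(k:ℝ)) ↔ (t - t0 < π*r/(k:ℝ)) from by constructor <;> intro h <;> linarith,
      lt_div_iff₀ hk0]
  have hltE : ∀ r t : ℝ, (t0 + π*r/(k:ℝ) ≤ t) ↔ π*r ≤ (t - t0)*(k:ℝ) := by
    intro r t
    rw [show (t0 + π*r/(k:ℝ) ≤ t) ↔ (π*r/(k:ℝ) ≤ t - t0) from by constructor <;> intro h <;> linarith,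
      div_le_iff₀ hk0]
  have memH2 : ∀ t : ℝ, p5 t ∈ H2 ↔ ∃ n : ℤ, (k:ℝ)*t + b = c₂ + 2*π*n := by
    intro t
    rw [hH2, hp5 t]
    simp only [Set.mem_setOf_eq]
    exact coe_eq_iff _ _
  have memL1 : ∀ t : ℝ, p5 t ∈ L1 ↔ ∃ n : ℤ, t + ((k:ℝ)*t + b) = c₁ + 2*π*n := by
    intro t
    rw [hL1, hp5 t]
    simp only [Set.mem_setOf_eq]
    rw [show ((t:ℝ) : AddCircle (2*Real.pi)) + (((k:ℝ)*t+b : ℝ) : AddCircle (2*Real.pi))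
        = ((t + ((k:ℝ)*t+b) : ℝ) : AddCircle (2*Real.pi)) from by norm_cast]
    exact coe_eq_iff _ _
  have memL3 : ∀ t : ℝ, p5 t ∈ L3 ↔ ∃ n : ℤ, t = c₃ + 2*π*n := by
    intro t
    rw [hL3, hp5 t]
    simp only [Set.mem_setOf_eq]
    exact coe_eq_iff _ _
  -- the L1 hitting condition in scaled coordinates
  set D : ℝ := (((k:ℝ)+1)*t0 - c₁ + b)*(k:ℝ)/π with hDdef
  have hD : D*π = (((k:ℝ)+1)*t0 - c₁ + b)*(k:ℝ) := by
    rw [hDdef]; field_simp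
  have segL1 : ∀ j : ℕ, (Seg j ∩ L1).Nonempty ↔ ∃ n : ℤ,
      D + j*((k:ℝ)+1) < 2*(k:ℝ)*n ∧ 2*(k:ℝ)*n < D + j*((k:ℝ)+1) + ((k:ℝ)+1) := by
    intro j
    constructor
    · rintro ⟨y, hy1, hy2⟩
      rw [hSeg j] at hy1
      obtain ⟨t, ht, rfl⟩ := hy1
      obtain ⟨n, hn⟩ := (memL1 t).mp hy2
      have h1 : π*(j:ℝ) < (t - t0)*(k:ℝ) := (hlt j t).mp ht.1
      have h2 : (t - t0)*(k:ℝ) < π*((j:ℝ)+1) := (htl ((j:ℝ)+1) t).mp ht.2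
      have hnk := congrArg (fun z => z * (k:ℝ)) hn
      refine ⟨n, ?_, ?_⟩
      · rw [← mul_lt_mul_iff_of_pos_right hπ]
        have h1k := mul_lt_mul_of_pos_right h1 (show (0:ℝ) < (k:ℝ)+1 by positivity)
        nlinarith [hD, hnk, h1k]
      · rw [← mul_lt_mul_iff_of_pos_right hπ]
        have h2k := mul_lt_mul_of_pos_right h2 (show (0:ℝ) < (k:ℝ)+1 by positivity)
        nlinarith [hD, hnk, h2k]
    · rintro ⟨n, hn1, hn2⟩
      have hkk : (0:ℝ) < (k:ℝ)+1 := by positivity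
      set t : ℝ := (c₁ + 2*π*(n:ℝ) - b)/((k:ℝ)+1) with htdef
      have ht' : ((k:ℝ)+1)*t = c₁ + 2*π*(n:ℝ) - b := by
        rw [htdef]; field_simp
      have ht'' := congrArg (fun z => z * (k:ℝ)) ht'
      refine ⟨p5 t, ?_, (memL1 t).mpr ⟨n, by linarith⟩⟩
      rw [hSeg j]
      refine ⟨t, ⟨?_, ?_⟩, rfl⟩
      · rw [hlt]
        have hn1' := mul_lt_mul_of_pos_right hn1 hπ
        have key : π*(j:ℝ)*((k:ℝ)+1) < (t - t0)*(k:ℝ)*((k:ℝ)+1) := by nlinarith [hD, hn1', ht'']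
        exact lt_of_mul_lt_mul_right key hkk.le
      · rw [htl]
        have hn2' := mul_lt_mul_of_pos_right hn2 hπ
        have key : (t - t0)*(k:ℝ)*((k:ℝ)+1) < π*((j:ℝ)+1)*((k:ℝ)+1) := by nlinarith [hD, hn2', ht'']
        exact lt_of_mul_lt_mul_right key hkk.le
  -- the H2 hitting condition
  set δ : ℝ := ((k:ℝ)*t0 + b - c₂)/π with hδdef
  have hδπ : δ*π = (k:ℝ)*t0 + b - c₂ := by
    rw [hδdef]; field_simp
  have segH2 : ∀ j : ℕ, (Seg j ∩ H2).Nonempty ↔ ∃ n : ℤ,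
      δ + j < 2*(n:ℝ) ∧ 2*(n:ℝ) < δ + j + 1 := by
    intro j
    constructor
    · rintro ⟨y, hy1, hy2⟩
      rw [hSeg j] at hy1
      obtain ⟨t, ht, rfl⟩ := hy1
      obtain ⟨n, hn⟩ := (memH2 t).mp hy2
      have h1 : π*(j:ℝ) < (t - t0)*(k:ℝ) := (hlt j t).mp ht.1
      have h2 : (t - t0)*(k:ℝ) < π*((j:ℝ)+1) := (htl ((j:ℝ)+1) t).mp ht.2
      refine ⟨n, ?_, ?_⟩
      · rw [← mul_lt_mul_iff_of_pos_right hπ]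
        linarith [hδπ, hn, h1]
      · rw [← mul_lt_mul_iff_of_pos_right hπ]
        linarith [hδπ, hn, h2]
    · rintro ⟨n, hn1, hn2⟩
      set t : ℝ := (c₂ + 2*π*(n:ℝ) - b)/(k:ℝ) with htdef
      have ht' : (k:ℝ)*t = c₂ + 2*π*(n:ℝ) - b := by
        rw [htdef]; field_simp
      have hn1' := mul_lt_mul_of_pos_right hn1 hπ
      have hn2' := mul_lt_mul_of_pos_right hn2 hπ
      refine ⟨p5 t, ?_, (memH2 t).mpr ⟨n, by linarith⟩⟩
      rw [hSeg j]
      refine ⟨t, ⟨?_, ?_⟩, rfl⟩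
      · rw [hlt]; linarith [hδπ, ht', hn1']
      · rw [htl]; linarith [hδπ, ht', hn2']
  have hgen2' : ∀ (j:ℕ) (n:ℤ), δ + (j:ℝ) ≠ 2*(n:ℝ) := by
    intro j n h
    apply hgen2 j
    rw [memH2]
    refine ⟨n, ?_⟩
    have hsimp : (k:ℝ)*(t0 + π*(j:ℝ)/(k:ℝ)) = (k:ℝ)*t0 + π*(j:ℝ) := by
      field_simp
    rw [hsimp]
    have h' := congrArg (fun z => z*π) h
    linarith [hδπ, h']
  have hδZ : ∀ z : ℤ, δ ≠ (z:ℝ) := by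
    intro z hz
    rcases Int.even_or_odd z with ⟨m, hm⟩ | ⟨m, hm⟩
    · exact hgen2' 0 m (by push_cast [hm] at hz ⊢; linarith)
    · exact hgen2' 1 (m+1) (by push_cast [hm] at hz ⊢; linarith)
  have parH2 : ∀ j : ℕ, (Seg j ∩ H2).Nonempty ↔ (j:ℤ) % 2 = ⌈δ⌉ % 2 := by
    intro j
    rw [segH2 j]
    constructor
    · rintro ⟨n, h1, h2⟩
      have hc1 : ⌈δ⌉ ≤ 2*n - (j:ℤ) := Int.ceil_le.mpr (by push_cast; linarith)
      have hc2 : 2*n - (j:ℤ) - 1 < ⌈δ⌉ := by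
        have hcast : ((2*n - (j:ℤ) - 1 : ℤ):ℝ) < ((⌈δ⌉:ℤ):ℝ) :=
          lt_of_lt_of_le (by push_cast; linarith) (Int.le_ceil δ)
        exact_mod_cast hcast
      omega
    · intro hpar
      obtain ⟨n, hn⟩ : ∃ n : ℤ, ⌈δ⌉ + (j:ℤ) = 2*n := ⟨(⌈δ⌉ + (j:ℤ))/2, by omega⟩
      have hnR : ((⌈δ⌉:ℤ):ℝ) + (j:ℝ) = 2*(n:ℝ) := by exact_mod_cast congrArg (fun z : ℤ => (z:ℝ)) hn
      have hlt' : δ < ((⌈δ⌉:ℤ):ℝ) := lt_of_le_of_ne (Int.le_ceil δ) (hδZ ⌈δ⌉)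
      have hlt'' := Int.ceil_lt_add_one δ
      exact ⟨n, by linarith, by linarith⟩
  set ε₁ : ℕ := (⌈δ⌉ % 2).toNat with hε₁def
  have hε₁ : (ε₁:ℤ) = ⌈δ⌉ % 2 := Int.toNat_of_nonneg (Int.emod_nonneg _ two_ne_zero)
  have hε₁lt : ε₁ < 2 := by omega
  have parH2' : ∀ j : ℕ, (Seg j ∩ H2).Nonempty ↔ j % 2 = ε₁ := by
    intro j
    rw [parH2 j]
    constructor
    · intro h; omega
    · intro h; omega
  refine ⟨?_, ?_, ?_⟩
  · have hset : {j : ℕ | j < 2 * k ∧ (Seg j ∩ H2).Nonempty ∧ (Seg j ∩ L1).Nonempty}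
        = {j : ℕ | j < 2*k ∧ j % 2 = ε₁ ∧ ∃ n : ℤ,
            D + j*((k:ℝ)+1) < 2*(k:ℝ)*n ∧ 2*(k:ℝ)*n < D + j*((k:ℝ)+1) + ((k:ℝ)+1)} := by
      ext j
      simp only [Set.mem_setOf_eq]
      rw [parH2' j, segL1 j]
    rw [hset]
    exact count_aux k hk D ε₁
  · have hset : {j : ℕ | j < 2 * k ∧ ¬ (Seg j ∩ H2).Nonempty ∧ (Seg j ∩ L1).Nonempty}
        = {j : ℕ | j < 2*k ∧ j % 2 = 1 - ε₁ ∧ ∃ n : ℤ,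
            D + j*((k:ℝ)+1) < 2*(k:ℝ)*n ∧ 2*(k:ℝ)*n < D + j*((k:ℝ)+1) + ((k:ℝ)+1)} := by
      ext j
      simp only [Set.mem_setOf_eq]
      rw [parH2' j, segL1 j]
      constructor
      · rintro ⟨x1, x2, x3⟩; exact ⟨x1, by omega, x3⟩
      · rintro ⟨x1, x2, x3⟩; exact ⟨x1, by omega, x3⟩
    rw [hset]
    exact count_aux k hk D (1 - ε₁)
  · -- L3 part
    have h2π : (0:ℝ) < 2*π := by positivity
    set n₀ : ℤ := ⌊(t0 - c₃)/(2*π)⌋ + 1 with hn₀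
    set x : ℝ := c₃ + 2*π*(n₀:ℝ) with hxdef
    have hgen3' : ∀ (j:ℕ) (n:ℤ), t0 + π*(j:ℝ)/(k:ℝ) ≠ c₃ + 2*π*(n:ℝ) := by
      intro j n h
      exact hgen3 j ((memL3 _).mpr ⟨n, h⟩)
    have hx1 : t0 < x := by
      have h' : (t0 - c₃)/(2*π) < ((n₀:ℤ):ℝ) := by
        push_cast [hn₀]
        linarith [Int.lt_floor_add_one ((t0 - c₃)/(2*π))]
      rw [div_lt_iff₀ h2π] at h'
      rw [hxdef]; linarith
    have hxle : x ≤ t0 + 2*π := by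
      have h' : ((n₀:ℤ):ℝ) - 1 ≤ (t0 - c₃)/(2*π) := by
        push_cast [hn₀]
        linarith [Int.floor_le ((t0 - c₃)/(2*π))]
      rw [le_div_iff₀ h2π] at h'
      rw [hxdef]; linarith
    have h2kπ : π*((2*k:ℕ):ℝ)/(k:ℝ) = 2*π := by
      push_cast
      field_simp
    have hne : t0 + π*((2*k:ℕ):ℝ)/(k:ℝ) ≠ c₃ + 2*π*((n₀:ℤ):ℝ) := hgen3' (2*k) n₀
    have hx2 : x < t0 + 2*π := by
      rcases lt_or_eq_of_le hxle with h | h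
      · exact h
      · exfalso; apply hne; rw [h2kπ]; linarith
    set u : ℝ := (x - t0)*(k:ℝ)/π with hu
    have hu0 : 0 < u := by
      rw [hu]; exact div_pos (mul_pos (by linarith) hk0) hπ
    have hu2k : u < 2*(k:ℝ) := by
      rw [hu, div_lt_iff₀ hπ]
      nlinarith [hx2, hk0]
    set j₀ : ℕ := (⌊u⌋).toNat with hj₀
    have hj₀cast : ((j₀:ℕ):ℤ) = ⌊u⌋ := Int.toNat_of_nonneg (Int.floor_nonneg.mpr hu0.le)
    have hj₀R : ((j₀:ℕ):ℝ) = ((⌊u⌋:ℤ):ℝ) := by exact_mod_cast congrArg (fun z : ℤ => (z:ℝ)) hj₀cast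
    have hfl1 : ((j₀:ℕ):ℝ) ≤ u := by rw [hj₀R]; exact Int.floor_le u
    have hfl2 : u < ((j₀:ℕ):ℝ) + 1 := by rw [hj₀R]; exact Int.lt_floor_add_one u
    have hj₀lt : j₀ < 2*k := by
      have : ⌊u⌋ < ((2*k : ℕ):ℤ) := Int.floor_lt.mpr (by exact_mod_cast hu2k)
      omega
    have hxlo : t0 + π*(j₀:ℝ)/(k:ℝ) < x := by
      have hle : t0 + π*(j₀:ℝ)/(k:ℝ) ≤ x := by
        rw [hltE]
        rw [hu] at hfl1
        calc π*(j₀:ℝ) ≤ π*((x - t0)*(k:ℝ)/π) := by nlinarith [hfl1, hπ]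
          _ = (x - t0)*(k:ℝ) := by field_simp
      exact lt_of_le_of_ne hle (hgen3' j₀ n₀)
    have hxhi : x < t0 + π*((j₀:ℝ)+1)/(k:ℝ) := by
      rw [htl]
      rw [hu, div_lt_iff₀ hπ] at hfl2
      linarith [hfl2]
    have hmem : j₀ ∈ {j : ℕ | j < 2 * k ∧ (Seg j ∩ L3).Nonempty} := by
      refine ⟨hj₀lt, ⟨p5 x, ?_, (memL3 x).mpr ⟨n₀, hxdef⟩⟩⟩
      rw [hSeg j₀]
      exact ⟨x, ⟨hxlo, hxhi⟩, rfl⟩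
    have hsetL3 : {j : ℕ | j < 2 * k ∧ (Seg j ∩ L3).Nonempty} = {j₀} := by
      apply Set.eq_singleton_iff_unique_mem.mpr
      refine ⟨hmem, ?_⟩
      rintro j ⟨hj, y, hy1, hy2⟩
      rw [hSeg j] at hy1
      obtain ⟨t, ht, rfl⟩ := hy1
      obtain ⟨m, hm⟩ := (memL3 t).mp hy2
      have h1 : π*(j:ℝ) < (t - t0)*(k:ℝ) := (hlt j t).mp ht.1
      have h2 : (t - t0)*(k:ℝ) < π*((j:ℝ)+1) := (htl ((j:ℝ)+1) t).mp ht.2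
      have hjR : ((j:ℝ)+1) ≤ 2*(k:ℝ) := by exact_mod_cast (by omega : j+1 ≤ 2*k)
      have hjnn : (0:ℝ) ≤ π*(j:ℝ) := by positivity
      have htlo : t0 < t := by nlinarith [h1, hjnn, hk0]
      have hthi : t < t0 + 2*π := by
        nlinarith [h2, mul_le_mul_of_nonneg_left hjR hπ.le, hk0]
      have heq : t - x = 2*π*((m:ℝ) - (n₀:ℝ)) := by rw [hm, hxdef]; ring
      have hml : ((m:ℝ) - (n₀:ℝ)) < 1 := by
        have hh : (2*π)*((m:ℝ) - (n₀:ℝ)) < (2*π)*1 := by rw [mul_one]; linarith [heq, hthi, hx1]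
        exact lt_of_mul_lt_mul_left hh h2π.le
      have hmg : (-1:ℝ) < ((m:ℝ) - (n₀:ℝ)) := by
        have hh : (2*π)*(-1:ℝ) < (2*π)*((m:ℝ) - (n₀:ℝ)) := by linarith [heq, htlo, hx2]
        exact lt_of_mul_lt_mul_left hh h2π.le
      have hmn : m = n₀ := by
        have l1 : (m:ℤ) - n₀ < 1 := by exact_mod_cast hml
        have l2 : (-1:ℤ) < (m:ℤ) - n₀ := by exact_mod_cast hmg
        omega
      have htx : t = x := by rw [hxdef, hm, hmn]
      rw [htx] at h1 h2
      have hA := (htl ((j₀:ℝ)+1) x).mp hxhi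
      have hB := (hlt (j₀:ℝ) x).mp hxlo
      have hA' : (j:ℝ) < (j₀:ℝ)+1 :=
        lt_of_mul_lt_mul_left (show π*(j:ℝ) < π*((j₀:ℝ)+1) by linarith) hπ.le
      have hB' : (j₀:ℝ) < (j:ℝ)+1 :=
        lt_of_mul_lt_mul_left (show π*(j₀:ℝ) < π*((j:ℝ)+1) by linarith) hπ.le
      have e1 : j < j₀ + 1 := by exact_mod_cast hA'
      have e2 : j₀ < j + 1 := by exact_mod_cast hB'
      omega
    rw [hsetL3, Set.ncard_singleton]
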